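/- Let k ≥ 2, (r₀,s₀),…,(r_k,s_k) ∈ ℝ², γᵢ := rᵢ + sᵢ − 1, and suppose that for every y ∈ ℝ₊^k the matrix with entries δ_{ij}γᵢ/yᵢ − γ₀/(y₁+⋯+y_k) (i,j ∈ {1,…,k}) is positive semidefinite. If the intervals Iᵢ = ℝ₊ (so inf Iᵢ = 0), then max(1, r₀+s₀) ≤ min(r₁+s₁, …, r_k+s_k). -/

import Mathlib

open Finset

/-- With `γᵢ = rᵢ + sᵢ − 1`: if for every `y ∈ ℝ₊^k` the matrix with
entries `δ_{ij}γᵢ/yᵢ − γ₀/(y₁+⋯+y_k)` is positive semidefinite (the second-order necessary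
condition for the local Minkowski-type inequality on `ℝ₊^k`), then
`max(1, r₀+s₀) ≤ min(r₁+s₁, …, r_k+s_k)`. -/
theorem gini_minkowski_local_necessary
    (k : ℕ) (hk : 2 ≤ k) (r s : Fin (k + 1) → ℝ)
    (hpsd : ∀ y : Fin k → ℝ, (∀ i, 0 < y i) →
      (Matrix.of fun i j : Fin k =>
          (if i = j then (r i.succ + s i.succ - 1) / y i else 0) -
            (r 0 + s 0 - 1) / ∑ ℓ, y ℓ).PosSemidef) :
    ∀ j : Fin k, max 1 (r 0 + s 0) ≤ r j.succ + s j.succ := by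
  intro j
  set γ₀ : ℝ := r 0 + s 0 - 1 with hγ₀
  set γ : ℝ := r j.succ + s j.succ - 1 with hγ
  -- key: for all t > 0, γ * (1 + t) ≥ γ₀
  have key : ∀ t : ℝ, 0 < t → γ₀ ≤ γ * (1 + t) := by
    intro t ht
    set c : ℝ := t / (k - 1) with hc
    have hk1 : (1:ℝ) ≤ (k:ℝ) - 1 := by
      have : (2:ℝ) ≤ (k:ℝ) := by exact_mod_cast hk
      linarith
    have hc0 : 0 < c := div_pos ht (by linarith)
    set y : Fin k → ℝ := fun i => if i = j then 1 else c with hy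
    have hypos : ∀ i, 0 < y i := by
      intro i; simp only [hy]; split <;> norm_num [hc0]
    have hM := hpsd y hypos
    have hdiag := (Matrix.posSemidef_iff_dotProduct_mulVec.mp hM).2 (Pi.single j 1)
    have hsum : ∑ ℓ, y ℓ = 1 + t := by
      have h1 : ∀ ℓ, y ℓ = c + (if ℓ = j then (1:ℝ) - c else 0) := by
        intro ℓ; simp only [hy]; split <;> ring
      have h2 : ∑ ℓ, y ℓ = (k:ℝ) * c + (1 - c) := by
        simp [h1, Finset.sum_add_distrib, Finset.sum_ite_eq', mul_comm]
      rw [h2, hc]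
      field_simp
      ring
    have hSpos : (0:ℝ) < 1 + t := by linarith
    have hdd : 0 ≤ γ / y j - γ₀ / ∑ ℓ, y ℓ := by
      simpa [Matrix.mulVec_single, dotProduct, Pi.single_apply, Matrix.of_apply] using hdiag
    have hyj : y j = 1 := by simp [hy]
    rw [hyj, hsum, div_one, sub_nonneg, div_le_iff₀ hSpos] at hdd
    linarith [hdd]
  -- γ ≥ 0
  have hγnn : 0 ≤ γ := by
    by_contra h
    push_neg at h
    have ht : 0 < max 1 (γ₀ / γ) := lt_of_lt_of_le one_pos (le_max_left _ _)
    have := key _ ht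
    have h2 : γ₀ / γ ≤ max 1 (γ₀ / γ) := le_max_right _ _
    have h3 : γ * (1 + max 1 (γ₀ / γ)) < γ * (γ₀ / γ) := by
      apply mul_lt_mul_of_neg_left _ h
      have h4 : (1:ℝ) ≤ max 1 (γ₀ / γ) := le_max_left _ _
      linarith
    have h5 : γ * (γ₀ / γ) = γ₀ := mul_div_cancel₀ _ (ne_of_lt h)
    linarith
  -- γ ≥ γ₀
  have hγγ₀ : γ₀ ≤ γ := by
    by_contra h
    push_neg at h
    set t : ℝ := (γ₀ - γ) / (2 * (γ + 1)) with ht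
    have htpos : 0 < t := div_pos (by linarith) (by linarith)
    have := key t htpos
    have h2 : γ * t ≤ (γ₀ - γ) / 2 := by
      rw [ht, ← mul_div_assoc, div_le_div_iff₀ (by linarith) (by norm_num)]
      nlinarith
    have h3 : γ * (1 + t) = γ + γ * t := by ring
    clear_value t γ γ₀
    linarith
  apply max_le <;> linarith [hγ, hγ₀, hγnn, hγγ₀]
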